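/- There is an isomorphism of Hopf algebras K ≅ C ⊗ k[Z/2], where C ⊗ k[Z/2] carries the tensor product Hopf algebra structure and k[Z/2] is the group algebra of the cyclic group of order 2; explicitly, C is (isomorphic to) the Hopf subalgebra of K generated by a and b, and c generates a central group-like of order 2. -/

import Mathlib

/- STATEMENT 15: K ≅ C ⊗ k[Z/2] as Hopf algebras: there is an algebra isomorphism
e : K → C ⊗ k[Z/2] with e(a) = a ⊗ 1, e(b) = b ⊗ 1, e(c) = 1 ⊗ g (so that C is the Hopf
subalgebra of K generated by a and b, and c corresponds to the central group-like generator
of k[Z/2] of order 2), and e intertwines the comultiplications and counits, where C ⊗ k[Z/2]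
carries the tensor product Hopf algebra structure.  The comultiplications/counits of K, C and
k[Z/2] are quantified over all algebra maps taking the prescribed values on generators. -/

open scoped TensorProduct

namespace Paper24

variable (k : Type) [Field k] (ξ : k)

/-- The generator `a` of the free algebra on three generators. -/
noncomputable def ka₀ : FreeAlgebra k (Fin 3) := FreeAlgebra.ι k 0
/-- The generator `b`. -/
noncomputable def kb₀ : FreeAlgebra k (Fin 3) := FreeAlgebra.ι k 1
/-- The generator `c`. -/
noncomputable def kc₀ : FreeAlgebra k (Fin 3) := FreeAlgebra.ι k 2

/-- The defining relations of the 24-dimensional Hopf algebra `K`. -/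
inductive KRel : FreeAlgebra k (Fin 3) → FreeAlgebra k (Fin 3) → Prop
  | a6 : KRel (ka₀ k ^ 6) 1
  | b2 : KRel (kb₀ k ^ 2) 0
  | c2 : KRel (kc₀ k ^ 2) 1
  | ba : KRel (kb₀ k * ka₀ k) (ξ • (ka₀ k * kb₀ k))
  | ac : KRel (ka₀ k * kc₀ k) (kc₀ k * ka₀ k)
  | bc : KRel (kb₀ k * kc₀ k) (kc₀ k * kb₀ k)

/-- The algebra `K`. -/
noncomputable abbrev KAlg := RingQuot (KRel k ξ)

/-- The image of `a` in `K`. -/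
noncomputable def Ka : KAlg k ξ := RingQuot.mkAlgHom k (KRel k ξ) (ka₀ k)
/-- The image of `b` in `K`. -/
noncomputable def Kb : KAlg k ξ := RingQuot.mkAlgHom k (KRel k ξ) (kb₀ k)
/-- The image of `c` in `K`. -/
noncomputable def Kc : KAlg k ξ := RingQuot.mkAlgHom k (KRel k ξ) (kc₀ k)

end Paper24


namespace Paper24

variable (k : Type) [Field k] (ξ : k)

/-- The generator `a` of the free algebra on two generators. -/
noncomputable def sa₀ : FreeAlgebra k (Fin 2) := FreeAlgebra.ι k 0
/-- The generator `b`. -/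
noncomputable def sb₀ : FreeAlgebra k (Fin 2) := FreeAlgebra.ι k 1

/-- The defining relations of the 12-dimensional Hopf algebra `C`. -/
inductive CCRel : FreeAlgebra k (Fin 2) → FreeAlgebra k (Fin 2) → Prop
  | a6 : CCRel (sa₀ k ^ 6) 1
  | b2 : CCRel (sb₀ k ^ 2) 0
  | ba : CCRel (sb₀ k * sa₀ k) (ξ • (sa₀ k * sb₀ k))

/-- The 12-dimensional Hopf algebra `C`. -/
noncomputable abbrev CCAlg := RingQuot (CCRel k ξ)

/-- The image of `a` in `C`. -/
noncomputable def CCa : CCAlg k ξ := RingQuot.mkAlgHom k (CCRel k ξ) (sa₀ k)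
/-- The image of `b` in `C`. -/
noncomputable def CCb : CCAlg k ξ := RingQuot.mkAlgHom k (CCRel k ξ) (sb₀ k)

end Paper24


section MyHelpers

namespace Paper24

variable (k : Type) [Field k] (ξ : k)

lemma Ka6 : Ka k ξ ^ 6 = 1 := by
  simpa [Ka, map_pow] using RingQuot.mkAlgHom_rel k (KRel.a6 (k := k) (ξ := ξ))

lemma Kb2 : Kb k ξ ^ 2 = 0 := by
  simpa [Kb, map_pow] using RingQuot.mkAlgHom_rel k (KRel.b2 (k := k) (ξ := ξ))

lemma Kc2 : Kc k ξ ^ 2 = 1 := by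
  simpa [Kc, map_pow] using RingQuot.mkAlgHom_rel k (KRel.c2 (k := k) (ξ := ξ))

lemma KbKa : Kb k ξ * Ka k ξ = ξ • (Ka k ξ * Kb k ξ) := by
  simpa [Ka, Kb, map_mul, map_smul] using RingQuot.mkAlgHom_rel k (KRel.ba (k := k) (ξ := ξ))

lemma KaKc : Ka k ξ * Kc k ξ = Kc k ξ * Ka k ξ := by
  simpa [Ka, Kc, map_mul] using RingQuot.mkAlgHom_rel k (KRel.ac (k := k) (ξ := ξ))

lemma KbKc : Kb k ξ * Kc k ξ = Kc k ξ * Kb k ξ := by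
  simpa [Kb, Kc, map_mul] using RingQuot.mkAlgHom_rel k (KRel.bc (k := k) (ξ := ξ))

lemma CCa6 : CCa k ξ ^ 6 = 1 := by
  simpa [CCa, map_pow] using RingQuot.mkAlgHom_rel k (CCRel.a6 (k := k) (ξ := ξ))

lemma CCb2 : CCb k ξ ^ 2 = 0 := by
  simpa [CCb, map_pow] using RingQuot.mkAlgHom_rel k (CCRel.b2 (k := k) (ξ := ξ))

lemma CCbCCa : CCb k ξ * CCa k ξ = ξ • (CCa k ξ * CCb k ξ) := by
  simpa [CCa, CCb, map_mul, map_smul] using RingQuot.mkAlgHom_rel k (CCRel.ba (k := k) (ξ := ξ))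

/-- everything in K commutes with Kc -/
lemma Kc_central (x : KAlg k ξ) : Commute x (Kc k ξ) := by
  obtain ⟨y, rfl⟩ := RingQuot.mkAlgHom_surjective k (KRel k ξ) x
  induction y using FreeAlgebra.induction with
  | grade0 r => simpa [Commute, SemiconjBy] using (Algebra.commutes r (Kc k ξ))
  | grade1 i =>
    fin_cases i
    · exact (KaKc k ξ)
    · exact (KbKc k ξ)
    · rfl
  | mul x y hx hy => rw [map_mul]; exact hx.mul_left hy
  | add x y hx hy => rw [map_add]; exact hx.add_left hy

lemma Kc_pow_mod (n : ℕ) : Kc k ξ ^ (n % 2) = Kc k ξ ^ n := by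
  conv_rhs => rw [← Nat.div_add_mod n 2]
  rw [pow_add, pow_mul, Kc2, one_pow, one_mul]

/-- The monoid hom Z/2 → K sending the generator to c. -/
noncomputable def cPow : Multiplicative (ZMod 2) →* KAlg k ξ where
  toFun z := Kc k ξ ^ (z.toAdd.val)
  map_one' := by simp
  map_mul' x y := by
    show Kc k ξ ^ (Multiplicative.toAdd x + Multiplicative.toAdd y).val = _
    rw [ZMod.val_add, Kc_pow_mod, pow_add]

/-- The algebra map C → K. -/
noncomputable def fCK : CCAlg k ξ →ₐ[k] KAlg k ξ :=
  RingQuot.liftAlgHom k ⟨FreeAlgebra.lift k ![Ka k ξ, Kb k ξ], by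
    rintro x y h
    induction h <;>
      simp [sa₀, sb₀, map_pow, map_mul, map_smul, map_one, Ka6, Kb2, KbKa]⟩

/-- The algebra map k[Z/2] → K. -/
noncomputable def gGK : MonoidAlgebra k (Multiplicative (ZMod 2)) →ₐ[k] KAlg k ξ :=
  MonoidAlgebra.lift k (KAlg k ξ) (Multiplicative (ZMod 2)) (cPow k ξ)

lemma gGK_comm (x : KAlg k ξ) (y : MonoidAlgebra k (Multiplicative (ZMod 2))) :
    Commute x (gGK k ξ y) := by
  induction y using MonoidAlgebra.induction_on with
  | of z =>
    rw [gGK, MonoidAlgebra.lift_of]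
    exact (Kc_central k ξ x).pow_right _
  | add f g hf hg => rw [map_add]; exact hf.add_right hg
  | smul r f hf => rw [map_smul]; exact hf.smul_right r

/-- The inverse algebra map C ⊗ k[Z/2] → K. -/
noncomputable def φinv : (CCAlg k ξ) ⊗[k] (MonoidAlgebra k (Multiplicative (ZMod 2))) →ₐ[k] KAlg k ξ :=
  Algebra.TensorProduct.lift (fCK k ξ) (gGK k ξ) (fun x y => gGK_comm k ξ (fCK k ξ x) y)

/-- The forward algebra map K → C ⊗ k[Z/2]. -/
noncomputable def eFwd : KAlg k ξ →ₐ[k] (CCAlg k ξ) ⊗[k] (MonoidAlgebra k (Multiplicative (ZMod 2))) :=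
  RingQuot.liftAlgHom k ⟨FreeAlgebra.lift k
    ![(CCa k ξ) ⊗ₜ[k] 1, (CCb k ξ) ⊗ₜ[k] 1,
      (1 : CCAlg k ξ) ⊗ₜ[k] (MonoidAlgebra.of k (Multiplicative (ZMod 2)) (Multiplicative.ofAdd (1 : ZMod 2)))], by
    rintro x y h
    have hg2 : (Multiplicative.ofAdd (1 : ZMod 2)) * (Multiplicative.ofAdd (1 : ZMod 2)) = 1 := by decide
    induction h with
    | a6 => simp [ka₀, map_pow, map_one, Algebra.TensorProduct.tmul_pow, CCa6,
        Algebra.TensorProduct.one_def]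
    | b2 => simp [kb₀, map_pow, Algebra.TensorProduct.tmul_pow, CCb2]
    | c2 =>
      have hg2' : (MonoidAlgebra.of k (Multiplicative (ZMod 2)) (Multiplicative.ofAdd (1 : ZMod 2)))
          * (MonoidAlgebra.of k (Multiplicative (ZMod 2)) (Multiplicative.ofAdd (1 : ZMod 2))) = 1 := by
        rw [← map_mul, hg2, map_one]
      simp [kc₀, map_pow, map_one, Algebra.TensorProduct.tmul_pow, pow_two, hg2', hg2,
        Algebra.TensorProduct.one_def, MonoidAlgebra.one_def]
    | ba =>
      simp [ka₀, kb₀, map_mul, map_smul, Algebra.TensorProduct.tmul_mul_tmul, CCbCCa,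
        TensorProduct.smul_tmul']
    | ac => simp [ka₀, kc₀, map_mul, Algebra.TensorProduct.tmul_mul_tmul]
    | bc => simp [kb₀, kc₀, map_mul, Algebra.TensorProduct.tmul_mul_tmul]⟩

lemma eFwd_Ka : eFwd k ξ (Ka k ξ) = (CCa k ξ) ⊗ₜ[k] 1 := by
  simp [eFwd, Ka, ka₀, RingQuot.liftAlgHom_mkAlgHom_apply]

lemma eFwd_Kb : eFwd k ξ (Kb k ξ) = (CCb k ξ) ⊗ₜ[k] 1 := by
  simp [eFwd, Kb, kb₀, RingQuot.liftAlgHom_mkAlgHom_apply]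

lemma eFwd_Kc : eFwd k ξ (Kc k ξ) = (1 : CCAlg k ξ) ⊗ₜ[k]
    (MonoidAlgebra.of k (Multiplicative (ZMod 2)) (Multiplicative.ofAdd (1 : ZMod 2))) := by
  simp [eFwd, Kc, kc₀, RingQuot.liftAlgHom_mkAlgHom_apply]

lemma fCK_CCa : fCK k ξ (CCa k ξ) = Ka k ξ := by
  simp [fCK, CCa, sa₀, RingQuot.liftAlgHom_mkAlgHom_apply]

lemma fCK_CCb : fCK k ξ (CCb k ξ) = Kb k ξ := by
  simp [fCK, CCb, sb₀, RingQuot.liftAlgHom_mkAlgHom_apply]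

lemma φinv_comp_eFwd : (φinv k ξ).comp (eFwd k ξ) = AlgHom.id k (KAlg k ξ) := by
  apply RingQuot.ringQuot_ext'
  apply FreeAlgebra.hom_ext
  funext i
  fin_cases i <;>
    simp [φinv, eFwd, RingQuot.liftAlgHom_mkAlgHom_apply, Algebra.TensorProduct.lift_tmul,
      fCK_CCa, fCK_CCb, gGK, MonoidAlgebra.lift_of, cPow, Ka, Kb, Kc, ka₀, kb₀, kc₀,
      (show (1 : ZMod 2).val = 1 from rfl)]

lemma eFwd_comp_φinv : (eFwd k ξ).comp (φinv k ξ) =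
    AlgHom.id k ((CCAlg k ξ) ⊗[k] (MonoidAlgebra k (Multiplicative (ZMod 2)))) := by
  apply Algebra.TensorProduct.ext
  · apply RingQuot.ringQuot_ext'
    apply FreeAlgebra.hom_ext
    funext i
    fin_cases i <;>
      simp [φinv, fCK, RingQuot.liftAlgHom_mkAlgHom_apply, Algebra.TensorProduct.lift_tmul,
        eFwd_Ka, eFwd_Kb, CCa, CCb, sa₀, sb₀, Ka, Kb, ka₀, kb₀, eFwd]
  · refine MonoidAlgebra.algHom_ext ?_ (Subsingleton.elim _ _)
    intro z
    have hz : z = 1 ∨ z = Multiplicative.ofAdd (1 : ZMod 2) := by revert z; decide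
    rcases hz with rfl | rfl
    · simp [← MonoidAlgebra.one_def, ← Algebra.TensorProduct.one_def, map_one]
    · simp [φinv, Algebra.TensorProduct.lift_tmul, gGK, MonoidAlgebra.lift_of, cPow, eFwd_Kc,
        (show (1 : ZMod 2).val = 1 from rfl)]

/-- The main algebra isomorphism. -/
noncomputable def eIso : (KAlg k ξ) ≃ₐ[k] ((CCAlg k ξ) ⊗[k] (MonoidAlgebra k (Multiplicative (ZMod 2)))) :=
  AlgEquiv.ofAlgHom (eFwd k ξ) (φinv k ξ) (eFwd_comp_φinv k ξ) (φinv_comp_eFwd k ξ)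

end Paper24

end MyHelpers

lemma finmk0 (h : (0:ℕ) < 3) : (⟨0, h⟩ : Fin 3) = 0 := rfl
lemma finmk1 (h : (1:ℕ) < 3) : (⟨1, h⟩ : Fin 3) = 1 := rfl
lemma finmk2 (h : (2:ℕ) < 3) : (⟨2, h⟩ : Fin 3) = 2 := rfl

open Paper24

theorem stmt_15 (k : Type) [Field k] [IsAlgClosed k] [CharZero k]
    (ξ : k) (hξ : IsPrimitiveRoot ξ 6)
    -- the comultiplication and counit of K
    (ΔK : (KAlg k ξ) →ₐ[k] ((KAlg k ξ) ⊗[k] (KAlg k ξ)))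
    (hΔKa : ΔK (Ka k ξ) = (Ka k ξ) ⊗ₜ[k] (Ka k ξ)
        + (ξ ^ 4 + ξ ^ 5) • ((Kb k ξ) ⊗ₜ[k] ((Kb k ξ) * (Ka k ξ) ^ 3)))
    (hΔKb : ΔK (Kb k ξ) = (Kb k ξ) ⊗ₜ[k] ((Ka k ξ) ^ 4) + (Ka k ξ) ⊗ₜ[k] (Kb k ξ))
    (hΔKc : ΔK (Kc k ξ) = (Kc k ξ) ⊗ₜ[k] (Kc k ξ))
    (εK : (KAlg k ξ) →ₐ[k] k) (hεKa : εK (Ka k ξ) = 1) (hεKb : εK (Kb k ξ) = 0) (hεKc : εK (Kc k ξ) = 1)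
    -- the comultiplication and counit of C
    (ΔC : (CCAlg k ξ) →ₐ[k] ((CCAlg k ξ) ⊗[k] (CCAlg k ξ)))
    (hΔCa : ΔC (CCa k ξ) = (CCa k ξ) ⊗ₜ[k] (CCa k ξ)
        + (ξ ^ 4 + ξ ^ 5) • ((CCb k ξ) ⊗ₜ[k] ((CCb k ξ) * (CCa k ξ) ^ 3)))
    (hΔCb : ΔC (CCb k ξ) = (CCb k ξ) ⊗ₜ[k] ((CCa k ξ) ^ 4) + (CCa k ξ) ⊗ₜ[k] (CCb k ξ))
    (εC : (CCAlg k ξ) →ₐ[k] k) (hεCa : εC (CCa k ξ) = 1) (hεCb : εC (CCb k ξ) = 0)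
    -- the comultiplication and counit of the group algebra k[Z/2]
    (ΔG : (MonoidAlgebra k (Multiplicative (ZMod 2))) →ₐ[k] ((MonoidAlgebra k (Multiplicative (ZMod 2))) ⊗[k] (MonoidAlgebra k (Multiplicative (ZMod 2)))))
    (hΔG : ∀ z : Multiplicative (ZMod 2),
      ΔG (MonoidAlgebra.of k (Multiplicative (ZMod 2)) z)
        = MonoidAlgebra.of k (Multiplicative (ZMod 2)) z
            ⊗ₜ[k] MonoidAlgebra.of k (Multiplicative (ZMod 2)) z)
    (εG : (MonoidAlgebra k (Multiplicative (ZMod 2))) →ₐ[k] k)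
    (hεG : ∀ z : Multiplicative (ZMod 2),
      εG (MonoidAlgebra.of k (Multiplicative (ZMod 2)) z) = 1) :
    ∃ e : (KAlg k ξ) ≃ₐ[k] ((CCAlg k ξ) ⊗[k] (MonoidAlgebra k (Multiplicative (ZMod 2)))),
      -- values on the generators
      e (Ka k ξ) = (CCa k ξ) ⊗ₜ[k] (1 : MonoidAlgebra k (Multiplicative (ZMod 2))) ∧
      e (Kb k ξ) = (CCb k ξ) ⊗ₜ[k] (1 : MonoidAlgebra k (Multiplicative (ZMod 2))) ∧
      e (Kc k ξ) = (1 : CCAlg k ξ) ⊗ₜ[k]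
          (MonoidAlgebra.of k (Multiplicative (ZMod 2)) (Multiplicative.ofAdd (1 : ZMod 2))) ∧
      -- e intertwines the comultiplications (tensor product coalgebra structure on C ⊗ k[Z/2])
      (Algebra.TensorProduct.map e.toAlgHom e.toAlgHom).comp ΔK
        = ((Algebra.TensorProduct.tensorTensorTensorComm k k k k (CCAlg k ξ) (CCAlg k ξ) (MonoidAlgebra k (Multiplicative (ZMod 2))) (MonoidAlgebra k (Multiplicative (ZMod 2)))).toAlgHom.comp
            (Algebra.TensorProduct.map ΔC ΔG)).comp e.toAlgHom ∧
      -- e intertwines the counits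
      εK = ((Algebra.TensorProduct.lmul' k).comp (Algebra.TensorProduct.map εC εG)).comp e.toAlgHom := by
  refine ⟨eIso k ξ, eFwd_Ka k ξ, eFwd_Kb k ξ, eFwd_Kc k ξ, ?_, ?_⟩
  · apply RingQuot.ringQuot_ext'
    apply FreeAlgebra.hom_ext
    funext i
    have hKa : RingQuot.mkAlgHom k (KRel k ξ) (FreeAlgebra.ι k 0) = Ka k ξ := rfl
    have hKb : RingQuot.mkAlgHom k (KRel k ξ) (FreeAlgebra.ι k 1) = Kb k ξ := rfl
    have hKc : RingQuot.mkAlgHom k (KRel k ξ) (FreeAlgebra.ι k 2) = Kc k ξ := rfl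
    have hea : eIso k ξ (Ka k ξ) = (CCa k ξ) ⊗ₜ[k] 1 := eFwd_Ka k ξ
    have heb : eIso k ξ (Kb k ξ) = (CCb k ξ) ⊗ₜ[k] 1 := eFwd_Kb k ξ
    have hec : eIso k ξ (Kc k ξ) = (1 : CCAlg k ξ) ⊗ₜ[k] (MonoidAlgebra.of k (Multiplicative (ZMod 2)) (Multiplicative.ofAdd (1 : ZMod 2))) := eFwd_Kc k ξ
    have hcoe : ∀ x, (eIso k ξ).toAlgHom x = eIso k ξ x := fun _ => rfl
    fin_cases i <;>
      simp only [finmk0, finmk1, finmk2, Function.comp_apply, AlgHom.comp_apply, AlgHom.coe_comp,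
        AlgEquiv.toAlgHom_eq_coe, AlgEquiv.coe_algHom, hKa, hKb, hKc, AlgHom.coe_coe]
    · simp only [hcoe, hΔKa, hΔCa, hΔG, map_add, map_smul, map_mul, map_pow, AlgHom.coe_coe,
        Algebra.TensorProduct.map_tmul, hea, heb, hec, map_one,
        Algebra.TensorProduct.one_def, TensorProduct.add_tmul, TensorProduct.smul_tmul',
        Algebra.TensorProduct.tensorTensorTensorComm_tmul, Algebra.TensorProduct.tmul_pow,
        Algebra.TensorProduct.tmul_mul_tmul, one_pow, mul_one, one_mul]
    · simp only [hcoe, hΔKb, hΔCb, hΔG, map_add, map_smul, map_mul, map_pow, AlgHom.coe_coe,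
        Algebra.TensorProduct.map_tmul, hea, heb, hec, map_one,
        Algebra.TensorProduct.one_def, TensorProduct.add_tmul, TensorProduct.smul_tmul',
        Algebra.TensorProduct.tensorTensorTensorComm_tmul, Algebra.TensorProduct.tmul_pow,
        Algebra.TensorProduct.tmul_mul_tmul, one_pow, mul_one, one_mul]
    · simp only [hcoe, hΔKc, hΔG, map_add, map_smul, map_mul, map_pow, AlgHom.coe_coe,
        Algebra.TensorProduct.map_tmul, hea, heb, hec, map_one,
        Algebra.TensorProduct.one_def, TensorProduct.add_tmul, TensorProduct.smul_tmul',
        Algebra.TensorProduct.tensorTensorTensorComm_tmul, Algebra.TensorProduct.tmul_pow,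
        Algebra.TensorProduct.tmul_mul_tmul, one_pow, mul_one, one_mul]
  · apply RingQuot.ringQuot_ext'
    apply FreeAlgebra.hom_ext
    funext i
    have hKa : RingQuot.mkAlgHom k (KRel k ξ) (FreeAlgebra.ι k 0) = Ka k ξ := rfl
    have hKb : RingQuot.mkAlgHom k (KRel k ξ) (FreeAlgebra.ι k 1) = Kb k ξ := rfl
    have hKc : RingQuot.mkAlgHom k (KRel k ξ) (FreeAlgebra.ι k 2) = Kc k ξ := rfl
    have hea : eIso k ξ (Ka k ξ) = (CCa k ξ) ⊗ₜ[k] 1 := eFwd_Ka k ξ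
    have heb : eIso k ξ (Kb k ξ) = (CCb k ξ) ⊗ₜ[k] 1 := eFwd_Kb k ξ
    have hec : eIso k ξ (Kc k ξ) = (1 : CCAlg k ξ) ⊗ₜ[k] (MonoidAlgebra.of k (Multiplicative (ZMod 2)) (Multiplicative.ofAdd (1 : ZMod 2))) := eFwd_Kc k ξ
    fin_cases i <;>
      simp only [finmk0, finmk1, finmk2, Function.comp_apply, AlgHom.comp_apply, AlgHom.coe_comp,
        AlgEquiv.toAlgHom_eq_coe, AlgEquiv.coe_algHom, hKa, hKb, hKc, AlgHom.coe_coe]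
    · simp only [hεKa, hea, Algebra.TensorProduct.map_tmul, hεCa, map_one, AlgHom.coe_coe,
        Algebra.TensorProduct.lmul'_apply_tmul, one_mul]
    · simp only [hεKb, heb, Algebra.TensorProduct.map_tmul, hεCb, map_one, AlgHom.coe_coe,
        Algebra.TensorProduct.lmul'_apply_tmul, zero_mul]
    · simp only [hεKc, hec, Algebra.TensorProduct.map_tmul, hεG, map_one, AlgHom.coe_coe,
        Algebra.TensorProduct.lmul'_apply_tmul, one_mul]
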